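/- Let R be a von Neumann regular commutative ring and let I be a proper ideal of R. Then the weak global dimension of R⋈I is 0, while for any maximal ideal m of R the ideal of R_m generated by the image of I is not a proper nonzero ideal of R_m (since R_m is a field). -/

import Mathlib

universe u

open scoped TensorProduct

namespace Paper

/-- The amalgamated duplication `R ⋈ I`, as the subring
`{(r, s) : s - r ∈ I} = {(r, r+i) : r ∈ R, i ∈ I}` of `R × R`. -/
def dup (R : Type*) [CommRing R] (I : Ideal R) : Subring (R × R) where
  carrier := {p | p.2 - p.1 ∈ I}
  zero_mem' := by simp
  one_mem' := by simp
  add_mem' := by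
    intro a b ha hb
    simp only [Set.mem_setOf_eq, Prod.fst_add, Prod.snd_add] at *
    have h : a.2 + b.2 - (a.1 + b.1) = (a.2 - a.1) + (b.2 - b.1) := by ring
    rw [h]; exact I.add_mem ha hb
  neg_mem' := by
    intro a ha
    simp only [Set.mem_setOf_eq, Prod.fst_neg, Prod.snd_neg] at *
    have h : -a.2 - -a.1 = -(a.2 - a.1) := by ring
    rw [h]; exact I.neg_mem ha
  mul_mem' := by
    intro a b ha hb
    simp only [Set.mem_setOf_eq, Prod.fst_mul, Prod.snd_mul] at *
    have h : a.2 * b.2 - a.1 * b.1 = a.2 * (b.2 - b.1) + (a.2 - a.1) * b.1 := by ring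
    rw [h]; exact I.add_mem (I.mul_mem_left _ hb) (I.mul_mem_right _ ha)

lemma mem_dup {R : Type*} [CommRing R] {I : Ideal R} {p : R × R} :
    p ∈ dup R I ↔ p.2 - p.1 ∈ I := Iff.rfl

/-- The diagonal embedding `R → R ⋈ I`, `r ↦ (r, r)`. -/
def diag (R : Type*) [CommRing R] (I : Ideal R) : R →+* dup R I where
  toFun r := ⟨(r, r), mem_dup.mpr (by simp)⟩
  map_one' := rfl
  map_mul' _ _ := rfl
  map_zero' := rfl
  map_add' _ _ := rfl

noncomputable instance dupAlgebra (R : Type*) [CommRing R] (I : Ideal R) :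
    Algebra R (dup R I) := (diag R I).toAlgebra

/-- `pdLE R n M` means that `M` has projective dimension `≤ n` as an `R`-module. -/
def pdLE (R : Type u) [CommRing R] : ℕ → (M : Type u) → [AddCommGroup M] → [Module R M] → Prop
  | 0, M, _, _ => Module.Projective R M
  | (n + 1), M, _, _ => pdLE R n (LinearMap.ker (Finsupp.linearCombination R (id : M → M)))

/-- `fdLE R n M` means that `M` has flat dimension `≤ n` as an `R`-module. -/
def fdLE (R : Type u) [CommRing R] : ℕ → (M : Type u) → [AddCommGroup M] → [Module R M] → Prop
  | 0, M, _, _ => Module.Flat R M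
  | (n + 1), M, _, _ => fdLE R n (LinearMap.ker (Finsupp.linearCombination R (id : M → M)))

/-- The projective dimension of an `R`-module `M`, as an element of `ℕ∞`. -/
noncomputable def projDim (R : Type u) [CommRing R] (M : Type u) [AddCommGroup M]
    [Module R M] : ℕ∞ :=
  sInf {n : ℕ∞ | ∃ k : ℕ, (k : ℕ∞) = n ∧ pdLE R k M}

/-- The flat dimension of an `R`-module `M`, as an element of `ℕ∞`. -/
noncomputable def flatDim (R : Type u) [CommRing R] (M : Type u) [AddCommGroup M]
    [Module R M] : ℕ∞ :=
  sInf {n : ℕ∞ | ∃ k : ℕ, (k : ℕ∞) = n ∧ fdLE R k M}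

/-- The global dimension of `R`: the supremum of projective dimensions of `R`-modules. -/
noncomputable def gldim (R : Type u) [CommRing R] : ℕ∞ :=
  ⨆ (M : Type u) (_ : AddCommGroup M) (_ : Module R M), projDim R M

/-- The weak global dimension of `R`: the supremum of flat dimensions of `R`-modules. -/
noncomputable def wdim (R : Type u) [CommRing R] : ℕ∞ :=
  ⨆ (M : Type u) (_ : AddCommGroup M) (_ : Module R M), flatDim R M


/-- The first projection `R ⋈ I → R`, `(r, r+i) ↦ r`. -/
def dupFst (R : Type*) [CommRing R] (I : Ideal R) : dup R I →+* R :=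
  (RingHom.fst R R).comp (dup R I).subtype

/-- The second projection `R ⋈ I → R`, `(r, r+i) ↦ r + i`. -/
def dupSnd (R : Type*) [CommRing R] (I : Ideal R) : dup R I →+* R :=
  (RingHom.snd R R).comp (dup R I).subtype

/-- A commutative ring is von Neumann regular if every `a` satisfies `a = a²b` for some `b`. -/
def IsVNRegular (R : Type*) [CommRing R] : Prop := ∀ a : R, ∃ b : R, a = a * a * b

/-- A commutative ring is semihereditary if every finitely generated ideal is projective. -/
def IsSemihereditary (R : Type*) [CommRing R] : Prop :=
  ∀ J : Ideal R, J.FG → Module.Projective R J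

/-- A commutative ring is coherent if every finitely generated ideal is finitely presented. -/
def IsCoherentRing (R : Type*) [CommRing R] : Prop :=
  ∀ J : Ideal R, J.FG → Module.FinitePresentation R J

/-- The content of a polynomial: the ideal generated by its coefficients. -/
def contentIdeal {R : Type*} [CommRing R] (f : Polynomial R) : Ideal R :=
  Ideal.span (Set.range f.coeff)

/-- A commutative ring is Gaussian if `c(fg) = c(f)c(g)` for all polynomials `f, g`. -/
def IsGaussianRing (R : Type*) [CommRing R] : Prop :=
  ∀ f g : Polynomial R, contentIdeal (f * g) = contentIdeal f * contentIdeal g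

/-- `R` is a `(1,d)`-ring if every finitely presented (i.e. `1`-presented) `R`-module has
projective dimension at most `d`. -/
def IsOneDRing (R : Type u) [CommRing R] (d : ℕ) : Prop :=
  ∀ (M : Type u) [AddCommGroup M] [Module R M],
    Module.FinitePresentation R M → projDim R M ≤ (d : ℕ∞)

/-- The trace ideal of an `R`-module `M`: the sum of the images of all `R`-linear maps
`M → R`. -/
def traceIdeal (R : Type*) [CommRing R] (M : Type*) [AddCommGroup M] [Module R M] : Ideal R :=
  ⨆ f : M →ₗ[R] R, LinearMap.range f


section Aux

/-- Uniqueness of quasi-inverses in a commutative ring. -/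
lemma qinv_unique {S : Type*} [CommRing S] {a b c : S}
    (h1 : a = a * a * b) (h2 : b = b * b * a)
    (h3 : a = a * a * c) (h4 : c = c * c * a) : b = c := by
  have hbc : a * b = a * c := by linear_combination b * h3 - c * h1
  linear_combination h2 - h4 + (b + c) * hbc

/-- Existence of quasi-inverses in a von Neumann regular commutative ring. -/
lemma qinv_exists {S : Type*} [CommRing S] (hS : IsVNRegular S) (a : S) :
    ∃ b, a = a * a * b ∧ b = b * b * a := by
  obtain ⟨c, hc⟩ := hS a
  exact ⟨a * c * c, by linear_combination (1 + a*c) * hc,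
    by linear_combination (a*c*c*c + c*c) * hc⟩

lemma span_pair_idem {S : Type*} [CommRing S] {e f : S} (he : e * e = e) (hf : f * f = f) :
    ∃ g : S, g * g = g ∧ Ideal.span {e} ⊔ Ideal.span {f} = Ideal.span {g} := by
  refine ⟨e + f - e * f, by linear_combination (1 + f*f - 2*f) * he + (1 - e) * hf, ?_⟩
  apply le_antisymm
  · rw [sup_le_iff]
    constructor <;> rw [Ideal.span_le, Set.singleton_subset_iff, SetLike.mem_coe,
      Ideal.mem_span_singleton]
    · exact ⟨e, by linear_combination (f - 1) * he⟩
    · exact ⟨f, by linear_combination (e - 1) * hf⟩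
  · rw [Ideal.span_le, Set.singleton_subset_iff]
    have h1 : e ∈ Ideal.span {e} ⊔ Ideal.span {f} :=
      Ideal.mem_sup_left (Ideal.mem_span_singleton_self e)
    have h2 : f ∈ Ideal.span {e} ⊔ Ideal.span {f} :=
      Ideal.mem_sup_right (Ideal.mem_span_singleton_self f)
    exact Submodule.sub_mem _ (Submodule.add_mem _ h1 h2) (Ideal.mul_mem_right _ _ h1)

/-- In a von Neumann regular commutative ring, every finitely generated ideal is
generated by an idempotent. -/
lemma fg_span_idem {S : Type*} [CommRing S] (hS : IsVNRegular S)
    {J : Ideal S} (hJ : J.FG) : ∃ e : S, e * e = e ∧ J = Ideal.span {e} := by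
  obtain ⟨s, rfl⟩ := hJ
  classical
  induction s using Finset.induction_on with
  | empty =>
    exact ⟨0, by ring, by rw [Finset.coe_empty, Ideal.span_empty,
      Ideal.span_singleton_eq_bot.mpr rfl]⟩
  | @insert a s ha ih =>
    obtain ⟨e, he, hse⟩ := ih
    obtain ⟨b, hb⟩ := hS a
    have hae : (Ideal.span {a} : Ideal S) = Ideal.span {a * b} := by
      apply le_antisymm <;> rw [Ideal.span_le, Set.singleton_subset_iff, SetLike.mem_coe,
        Ideal.mem_span_singleton]
      · exact ⟨a, by linear_combination hb⟩
      · exact ⟨b, rfl⟩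
    obtain ⟨g, hg, hgs⟩ := span_pair_idem (e := a * b) (f := e)
      (by linear_combination (-b) * hb) he
    refine ⟨g, hg, ?_⟩
    rw [Finset.coe_insert, Ideal.span_insert, hse, hae, hgs]

/-- Every module over a von Neumann regular commutative ring is flat. -/
lemma flat_of_vnr {S : Type*} [CommRing S] (hS : IsVNRegular S)
    (M : Type*) [AddCommGroup M] [Module S M] : Module.Flat S M := by
  rw [Module.Flat.iff_lift_lsmul_comp_subtype_injective]
  intro J hJ
  obtain ⟨e, he, rfl⟩ := fg_span_idem hS hJ
  set J : Ideal S := Ideal.span {e} with hJdef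
  have heJ : e ∈ J := Ideal.mem_span_singleton_self e
  set f : J ⊗[S] M →ₗ[S] M :=
    TensorProduct.lift ((LinearMap.lsmul S M).comp J.subtype) with hf
  set g : M →ₗ[S] J ⊗[S] M := TensorProduct.mk S J M ⟨e, heJ⟩ with hg
  have hgf : ∀ x : J ⊗[S] M, g (f x) = x := by
    intro x
    induction x with
    | zero => simp
    | add x y hx hy => rw [map_add, map_add, hx, hy]
    | tmul j m =>
      obtain ⟨j, hj⟩ := j
      obtain ⟨c, hc⟩ := Ideal.mem_span_singleton.mp hj
      have hje : j * e = j := by rw [hc]; linear_combination c * he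
      simp only [hf, hg, TensorProduct.lift.tmul, LinearMap.coe_comp, Function.comp_apply,
        Submodule.subtype_apply, LinearMap.lsmul_apply, TensorProduct.mk_apply]
      rw [← TensorProduct.smul_tmul]
      congr 1
      ext
      simp [hje, mul_comm]
  exact Function.LeftInverse.injective hgf

/-- The amalgamated duplication of a von Neumann regular ring along any ideal is
von Neumann regular. -/
lemma dup_vnr (R : Type*) [CommRing R] (I : Ideal R) (hR : IsVNRegular R) :
    IsVNRegular (dup R I) := by
  rintro ⟨⟨r, s⟩, hrs⟩
  rw [mem_dup] at hrs
  obtain ⟨r', hr1, hr2⟩ := qinv_exists hR r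
  obtain ⟨s', hs1, hs2⟩ := qinv_exists hR s
  have hmem : s' - r' ∈ I := by
    set phi := Ideal.Quotient.mk I with hphi
    have hsr : phi s = phi r := Ideal.Quotient.eq.mpr hrs
    have h1 : phi r = phi r * phi r * phi r' := by rw [← map_mul, ← map_mul, ← hr1]
    have h2 : phi r' = phi r' * phi r' * phi r := by rw [← map_mul, ← map_mul, ← hr2]
    have h3 : phi r = phi r * phi r * phi s' := by
      rw [← hsr, ← map_mul, ← map_mul, ← hs1]
    have h4 : phi s' = phi s' * phi s' * phi r := by
      rw [← hsr, ← map_mul, ← map_mul, ← hs2]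
    have := qinv_unique h1 h2 h3 h4
    exact Ideal.Quotient.eq.mp this.symm
  refine ⟨⟨(r', s'), mem_dup.mpr hmem⟩, ?_⟩
  apply Subtype.ext
  apply Prod.ext
  · exact hr1
  · exact hs1

end Aux

/-- If `R` is von Neumann regular and `I` is a proper ideal of `R`, then `wdim (R ⋈ I) = 0`,
while for any maximal ideal `m` of `R` the ideal `I R_m` of `R_m` is not a proper nonzero
ideal. -/
theorem wdim_dup_vnr (R : Type u) [CommRing R] (I : Ideal R)
    (hR : IsVNRegular R) (hI : I ≠ ⊤) :
    wdim (dup R I) = 0 ∧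
    ∀ (m : Ideal R) [m.IsMaximal],
      ¬(I.map (algebraMap R (Localization.AtPrime m)) ≠ ⊥ ∧
        I.map (algebraMap R (Localization.AtPrime m)) ≠ ⊤) := by
  constructor
  · have hflat := flat_of_vnr (dup_vnr R I hR)
    have hdim : ∀ (M : Type u) (_ : AddCommGroup M) (_ : Module (dup R I) M),
        flatDim (dup R I) M = 0 := by
      intro M iA iM
      refine le_antisymm (sInf_le ⟨0, rfl, ?_⟩) zero_le
      show Module.Flat (dup R I) M
      exact hflat M
    refine le_antisymm ?_ zero_le
    refine iSup_le fun M => iSup_le fun iA => iSup_le fun iM => ?_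
    rw [hdim M iA iM]
  · intro m hm
    rintro ⟨hne, hnt⟩
    set f := algebraMap R (Localization.AtPrime m) with hfdef
    by_cases hz : ∀ i ∈ I, f i = 0
    · apply hne
      rw [Ideal.map, eq_bot_iff, Ideal.span_le]
      rintro x ⟨i, hi, rfl⟩
      simpa using hz i hi
    · push_neg at hz
      obtain ⟨i, hiI, hi0⟩ := hz
      obtain ⟨b, hb⟩ := hR i
      by_cases he : i * b ∈ m
      · apply hi0
        have hu : IsUnit (f (1 - i * b)) := by
          apply IsLocalization.map_units (Localization.AtPrime m)
            (⟨1 - i * b, ?_⟩ : m.primeCompl)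
          intro hmem
          have : (1 : R) ∈ m := by
            have := m.add_mem hmem he
            simpa using this
          exact hm.ne_top (Ideal.eq_top_of_isUnit_mem _ this isUnit_one)
        have hz0 : f i * f (1 - i * b) = 0 := by
          rw [← map_mul, ← map_zero f]
          congr 1
          linear_combination hb
        obtain ⟨u, hu'⟩ := hu
        have := congrArg (· * (↑u⁻¹ : Localization.AtPrime m)) hz0
        simpa [mul_assoc, ← hu', zero_mul] using this
      · apply hnt
        apply Ideal.eq_top_of_isUnit_mem _
          (Ideal.mul_mem_right (f b) _ (Ideal.mem_map_of_mem f hiI))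
        rw [← map_mul]
        exact IsLocalization.map_units (Localization.AtPrime m) (⟨i * b, he⟩ : m.primeCompl)


end Paper
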